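/- Let r := H ← c ◇ B be a rule of program P. If the query ⟨B | c⟩ loops with respect to P, then ⟨H | c⟩ loops with respect to P. -/

import Mathlib

/- A formalization of binary CLP(C): terms, constraints, queries, rules,
   derivation steps, loops, projections, filters, DN / DNlog / DNsyn. -/

namespace CLP

/-- First-order terms over a signature of function symbols `F` with arities `arF`. -/
inductive Tm (F : Type) (arF : F → ℕ) : Type
  | var : ℕ → Tm F arF
  | app : (f : F) → (Fin (arF f) → Tm F arF) → Tm F arF

variable {F : Type} {arF : F → ℕ} {Pc : Type} {arP : Pc → ℕ}
  {Prd : Type} {arPrd : Prd → ℕ} {D : Type}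

/-- Variables of a term. -/
def Tm.fv : Tm F arF → Finset ℕ
  | .var x => {x}
  | .app _ ts => Finset.univ.biUnion fun i => (ts i).fv

/-- Apply a variable substitution to a term. -/
def Tm.rename (σ : ℕ → ℕ) : Tm F arF → Tm F arF
  | .var x => .var (σ x)
  | .app f ts => .app f fun i => (ts i).rename σ

/-- Finite conjunctions of primitive constraints (including equality). -/
inductive Con (F : Type) (arF : F → ℕ) (Pc : Type) (arP : Pc → ℕ) : Type
  | tru : Con F arF Pc arP
  | eq : Tm F arF → Tm F arF → Con F arF Pc arP
  | prim : (c : Pc) → (Fin (arP c) → Tm F arF) → Con F arF Pc arP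
  | and : Con F arF Pc arP → Con F arF Pc arP → Con F arF Pc arP

/-- Variables of a constraint. -/
def Con.fv : Con F arF Pc arP → Finset ℕ
  | .tru => ∅
  | .eq s t => s.fv ∪ t.fv
  | .prim _ ts => Finset.univ.biUnion fun i => (ts i).fv
  | .and c d => c.fv ∪ d.fv

/-- Apply a variable substitution to a constraint. -/
def Con.rename (σ : ℕ → ℕ) : Con F arF Pc arP → Con F arF Pc arP
  | .tru => .tru
  | .eq s t => .eq (s.rename σ) (t.rename σ)
  | .prim c ts => .prim c fun i => (ts i).rename σ
  | .and c d => .and (c.rename σ) (d.rename σ)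

/-- The domain of computation `D_C`: an interpretation of the function and
constraint-predicate symbols over a domain `D`. -/
structure Interp (F : Type) (arF : F → ℕ) (Pc : Type) (arP : Pc → ℕ) (D : Type) where
  fn : (f : F) → (Fin (arF f) → D) → D
  pr : (c : Pc) → (Fin (arP c) → D) → Prop

/-- Evaluation of a term under a valuation `v : Var → D`. -/
def Tm.eval (If : (f : F) → (Fin (arF f) → D) → D) (v : ℕ → D) : Tm F arF → D
  | .var x => v x
  | .app f ts => If f fun i => (ts i).eval If v

/-- `D_C ⊨_v c`. -/
def Con.Sat (I : Interp F arF Pc arP D) (v : ℕ → D) : Con F arF Pc arP → Prop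
  | .tru => True
  | .eq s t => s.eval I.fn v = t.eval I.fn v
  | .prim c ts => I.pr c fun i => (ts i).eval I.fn v
  | .and c d => c.Sat I v ∧ d.Sat I v

/-- A query `⟨p(t̃) | d⟩`. -/
structure Query (F : Type) (arF : F → ℕ) (Pc : Type) (arP : Pc → ℕ)
    (Prd : Type) (arPrd : Prd → ℕ) where
  p : Prd
  args : Fin (arPrd p) → Tm F arF
  con : Con F arF Pc arP

/-- Variables of a query. -/
def Query.fv (S : Query F arF Pc arP Prd arPrd) : Finset ℕ :=
  (Finset.univ.biUnion fun i => (S.args i).fv) ∪ S.con.fv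

/-- Apply a variable substitution to a query. -/
def Query.rename (σ : ℕ → ℕ) (S : Query F arF Pc arP Prd arPrd) :
    Query F arF Pc arP Prd arPrd :=
  ⟨S.p, fun i => (S.args i).rename σ, S.con.rename σ⟩

/-- The set `[S]` of atoms (predicate applied to domain values) described by a query `S`. -/
def Query.set (I : Interp F arF Pc arP D) (S : Query F arF Pc arP Prd arPrd) :
    Set (Σ p : Prd, Fin (arPrd p) → D) :=
  { a | ∃ v : ℕ → D, S.con.Sat I v ∧ a = ⟨S.p, fun i => (S.args i).eval I.fn v⟩ }

/-- `S'` is more general than `S` iff `[S] ⊆ [S']`. -/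
def MoreGen (I : Interp F arF Pc arP D) (S' S : Query F arF Pc arP Prd arPrd) : Prop :=
  S.set I ⊆ S'.set I

/-- A binary rule `p(s̃) ← c ◇ q(t̃)`. -/
structure Rule (F : Type) (arF : F → ℕ) (Pc : Type) (arP : Pc → ℕ)
    (Prd : Type) (arPrd : Prd → ℕ) where
  hp : Prd
  hargs : Fin (arPrd hp) → Tm F arF
  con : Con F arF Pc arP
  bp : Prd
  bargs : Fin (arPrd bp) → Tm F arF

/-- Variables of a rule. -/
def Rule.fv (r : Rule F arF Pc arP Prd arPrd) : Finset ℕ :=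
  (Finset.univ.biUnion fun i => (r.hargs i).fv) ∪ r.con.fv ∪
    (Finset.univ.biUnion fun i => (r.bargs i).fv)

/-- Apply a variable substitution to a rule. -/
def Rule.rename (σ : ℕ → ℕ) (r : Rule F arF Pc arP Prd arPrd) : Rule F arF Pc arP Prd arPrd :=
  ⟨r.hp, fun i => (r.hargs i).rename σ, r.con.rename σ, r.bp, fun i => (r.bargs i).rename σ⟩

/-- `r'` is a variant of `r`: obtained by renaming the variables by a bijection. -/
def Rule.IsVariant (r r' : Rule F arF Pc arP Prd arPrd) : Prop :=
  ∃ ρ : ℕ ≃ ℕ, r' = r.rename ρ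

/-- The query `⟨H | c⟩` of a rule `H ← c ◇ B`. -/
def Rule.headQuery (r : Rule F arF Pc arP Prd arPrd) : Query F arF Pc arP Prd arPrd :=
  ⟨r.hp, r.hargs, r.con⟩

/-- The query `⟨B | c⟩` of a rule `H ← c ◇ B`. -/
def Rule.bodyQuery (r : Rule F arF Pc arP Prd arPrd) : Query F arF Pc arP Prd arPrd :=
  ⟨r.bp, r.bargs, r.con⟩

/-- The constraint `ũ = w̃` for two sequences of terms. -/
def argsEqCon {n : ℕ} (u w : Fin n → Tm F arF) : Con F arF Pc arP :=
  (List.ofFn fun i => Con.eq (u i) (w i)).foldr .and .tru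

/-- The constraint `s̃' = ũ ∧ c' ∧ d` of the query resulting from a derivation step of
`S = ⟨p(ũ) | d⟩` with input rule `r' = p(s̃') ← c' ◇ q(t̃')`. -/
def stepCon (r' : Rule F arF Pc arP Prd arPrd) (S : Query F arF Pc arP Prd arPrd)
    (h : r'.hp = S.p) : Con F arF Pc arP :=
  Con.and
    (argsEqCon (fun i : Fin (arPrd S.p) => r'.hargs (Fin.cast (congrArg arPrd h).symm i)) S.args)
    (Con.and r'.con S.con)

/-- Derivation step of `S` using the (already renamed-apart) input rule `r'`:
the constraint `s̃' = ũ ∧ c' ∧ d` must be satisfiable in `D_C`, and the resulting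
query is `⟨q(t̃') | s̃' = ũ ∧ c' ∧ d⟩`. -/
def StepWith (I : Interp F arF Pc arP D) (r' : Rule F arF Pc arP Prd arPrd)
    (S T : Query F arF Pc arP Prd arPrd) : Prop :=
  ∃ h : r'.hp = S.p, (∃ v : ℕ → D, (stepCon r' S h).Sat I v) ∧
    T = ⟨r'.bp, r'.bargs, stepCon r' S h⟩

/-- Derivation step `S ⟹_r T`: there is a variant `r'` of `r`, variable disjoint
with `S`, which is an input rule for a step from `S` to `T`. -/
def Step (I : Interp F arF Pc arP D) (r : Rule F arF Pc arP Prd arPrd)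
    (S T : Query F arF Pc arP Prd arPrd) : Prop :=
  ∃ r' : Rule F arF Pc arP Prd arPrd,
    r.IsVariant r' ∧ Disjoint r'.fv S.fv ∧ StepWith I r' S T

/-- `S₀` loops w.r.t. the program `P`: there is an infinite derivation of `P ∪ {S₀}`,
i.e. an infinite sequence of derivation steps whose input rules are variants of rules
of `P`, variable disjoint from `S₀` and from the input rules used at earlier steps
(standardization apart). -/
def Loops (I : Interp F arF Pc arP D) (P : Set (Rule F arF Pc arP Prd arPrd))
    (S₀ : Query F arF Pc arP Prd arPrd) : Prop :=
  ∃ (S : ℕ → Query F arF Pc arP Prd arPrd) (rv : ℕ → Rule F arF Pc arP Prd arPrd),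
    S 0 = S₀ ∧
    ∀ n : ℕ, (∃ r ∈ P, r.IsVariant (rv n)) ∧
      Disjoint (rv n).fv S₀.fv ∧ (∀ m < n, Disjoint (rv n).fv (rv m).fv) ∧
      StepWith I (rv n) (S n) (S (n + 1))

/-! ## Sets of positions, projections, filters -/

/-- The set `[S|τ]` of projected atoms described by the projection of a query on a
set of positions `τ`. -/
def Query.projSet (I : Interp F arF Pc arP D) (τ : ∀ p : Prd, Set (Fin (arPrd p)))
    (S : Query F arF Pc arP Prd arPrd) :
    Set (Σ p : Prd, {i : Fin (arPrd p) // i ∈ τ p} → D) :=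
  { a | ∃ v : ℕ → D, S.con.Sat I v ∧ a = ⟨S.p, fun i => (S.args i.1).eval I.fn v⟩ }

/-- The complement `τ̄` of a set of positions. -/
def complPos (τ : ∀ p : Prd, Set (Fin (arPrd p))) : ∀ p : Prd, Set (Fin (arPrd p)) :=
  fun p => (τ p)ᶜ

/-- A query over a projected predicate `p|τ`. -/
structure PQuery (F : Type) (arF : F → ℕ) (Pc : Type) (arP : Pc → ℕ)
    {Prd : Type} {arPrd : Prd → ℕ} (τ : ∀ p : Prd, Set (Fin (arPrd p))) (p : Prd) where
  args : {i : Fin (arPrd p) // i ∈ τ p} → Tm F arF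
  con : Con F arF Pc arP

/-- The set of projected atoms described by a projected query. -/
def PQuery.set (I : Interp F arF Pc arP D) {τ : ∀ p : Prd, Set (Fin (arPrd p))} {p : Prd}
    (Q : PQuery F arF Pc arP τ p) :
    Set (Σ q : Prd, {i : Fin (arPrd q) // i ∈ τ q} → D) :=
  { a | ∃ v : ℕ → D, Q.con.Sat I v ∧ a = ⟨p, fun i => (Q.args i).eval I.fn v⟩ }

/-- A filter `Δ = (τ, δ)`: a set of positions together with, for each predicate `p`,
a query `δ(p)` over the projected predicate `p|τ` with satisfiable constraint. -/
structure Filt {F : Type} {arF : F → ℕ} {Pc : Type} {arP : Pc → ℕ} {D : Type}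
    (I : Interp F arF Pc arP D) (Prd : Type) (arPrd : Prd → ℕ) where
  τ : ∀ p : Prd, Set (Fin (arPrd p))
  δ : ∀ p : Prd, PQuery F arF Pc arP τ p
  δ_sat : ∀ p : Prd, ∃ v : ℕ → D, (δ p).con.Sat I v

variable {I : Interp F arF Pc arP D}

/-- A query `S` satisfies the filter `Δ` iff `[S|τ] ⊆ [δ(rel(S))]`. -/
def Filt.Satisfies (Δ : Filt I Prd arPrd) (S : Query F arF Pc arP Prd arPrd) : Prop :=
  S.projSet I Δ.τ ⊆ (Δ.δ S.p).set I

/-- `S'` is `Δ`-more general than `S`: `S'|τ̄` is more general than `S|τ̄`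
and `S'` satisfies `Δ`. -/
def Filt.DeltaMoreGen (Δ : Filt I Prd arPrd) (S' S : Query F arF Pc arP Prd arPrd) : Prop :=
  S.projSet I (complPos Δ.τ) ⊆ S'.projSet I (complPos Δ.τ) ∧ Δ.Satisfies S'

/-- `Δ` is derivation neutral (DN) for `r`. -/
def Filt.DN (Δ : Filt I Prd arPrd) (r : Rule F arF Pc arP Prd arPrd) : Prop :=
  ∀ S T, Step I r S T → ∀ S', Δ.DeltaMoreGen S' S →
    ∃ T', Step I r S' T' ∧ Δ.DeltaMoreGen T' T

/-! ## Normalized rules and DNlog -/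

/-- A normalized rule `p(X̃) ← c ◇ q(Ỹ)` where `X̃, Ỹ` are disjoint sequences of
distinct variables. -/
structure NRule (F : Type) (arF : F → ℕ) (Pc : Type) (arP : Pc → ℕ)
    (Prd : Type) (arPrd : Prd → ℕ) where
  hp : Prd
  X : Fin (arPrd hp) → ℕ
  bp : Prd
  Y : Fin (arPrd bp) → ℕ
  hX : Function.Injective X
  hY : Function.Injective Y
  hXY : ∀ i j, X i ≠ Y j
  con : Con F arF Pc arP

/-- The underlying rule of a normalized rule. -/
def NRule.toRule (r : NRule F arF Pc arP Prd arPrd) : Rule F arF Pc arP Prd arPrd :=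
  ⟨r.hp, fun i => .var (r.X i), r.con, r.bp, fun i => .var (r.Y i)⟩

/-- `local_var(r) = Var(c) ∖ (Var(X̃) ∪ Var(Ỹ))`. -/
def NRule.localVar (r : NRule F arF Pc arP Prd arPrd) : Set ℕ :=
  ↑r.con.fv \ (Set.range r.X ∪ Set.range r.Y)

/-- `v` and `w` agree on all variables outside `W`. -/
def agreesOff (W : Set ℕ) (v w : ℕ → D) : Prop := ∀ x ∉ W, v x = w x

/-- Semantics under `v` of the formula `sat(s̃, Q) = ∃_{Var(Q')} (s̃ = ũ' ∧ d')`,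
`Q'` a variable-disjoint variant of `Q = ⟨p|τ(ũ) | d⟩`. -/
def satFor (I : Interp F arF Pc arP D) {τ : ∀ p : Prd, Set (Fin (arPrd p))} {p : Prd}
    (s : {i : Fin (arPrd p) // i ∈ τ p} → Tm F arF) (Q : PQuery F arF Pc arP τ p)
    (v : ℕ → D) : Prop :=
  ∃ w : ℕ → D, Q.con.Sat I w ∧ ∀ i, (s i).eval I.fn v = (Q.args i).eval I.fn w

/-- `Δ` is DNlog for a normalized rule `r = p(X̃) ← c ◇ q(Ỹ)`:
`D_C ⊨ c → ∀_{X̃|τ} [ sat(X̃|τ, δ(p)) → ∃_Y (sat(Ỹ|τ, δ(q)) ∧ c) ]` where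
`Y = Var(Ỹ|τ) ∪ local_var(r)`. -/
def Filt.DNlog (Δ : Filt I Prd arPrd) (r : NRule F arF Pc arP Prd arPrd) : Prop :=
  ∀ v : ℕ → D, r.con.Sat I v →
    ∀ v₁ : ℕ → D, agreesOff (r.X '' Δ.τ r.hp) v₁ v →
      satFor I (fun i => Tm.var (r.X i.1)) (Δ.δ r.hp) v₁ →
        ∃ v₂ : ℕ → D,
          agreesOff (r.Y '' Δ.τ r.bp ∪ r.localVar) v₂ v₁ ∧
          satFor I (fun i => Tm.var (r.Y i.1)) (Δ.δ r.bp) v₂ ∧ r.con.Sat I v₂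

/-! ## Flat rules and DNsyn -/

/-- Variables of a sequence of terms. -/
def varsOf {n : ℕ} (s : Fin n → Tm F arF) : Finset ℕ :=
  Finset.univ.biUnion fun i => (s i).fv

/-- Variables of the projection of a sequence of terms on a set of positions. -/
def varsOfProj {n : ℕ} (σ : Set (Fin n)) (s : Fin n → Tm F arF) : Set ℕ :=
  ⋃ i : {i : Fin n // i ∈ σ}, ↑(s i.1).fv

/-- A flat rule `p(X̃) ← (X̃ = s̃ ∧ Ỹ = t̃) ◇ q(Ỹ)` with `Var(s̃, t̃)` local. -/
structure FlatRule (F : Type) (arF : F → ℕ) (Pc : Type) (arP : Pc → ℕ)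
    (Prd : Type) (arPrd : Prd → ℕ) extends NRule F arF Pc arP Prd arPrd where
  s : Fin (arPrd hp) → Tm F arF
  t : Fin (arPrd bp) → Tm F arF
  con_eq : con = Con.and (argsEqCon (fun i => Tm.var (X i)) s)
                         (argsEqCon (fun i => Tm.var (Y i)) t)
  local_args : ∀ x ∈ varsOf s ∪ varsOf t, x ∉ Set.range X ∪ Set.range Y

/-! ## The constraint domain Term (logic programming) -/

/-- Finite trees (ground terms) over `F`. -/
inductive GTm (F : Type) (arF : F → ℕ) : Type
  | app : (f : F) → (Fin (arF f) → GTm F arF) → GTm F arF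

/-- Arities for the empty set of constraint-predicate symbols (only `=` is available). -/
def emptyAr : Empty → ℕ := fun c => c.elim

/-- The domain of computation of the constraint domain `Term`: the algebra of
finite trees, with no primitive constraints but equality. -/
def termInterp (F : Type) (arF : F → ℕ) : Interp F arF Empty emptyAr (GTm F arF) :=
  ⟨fun f ts => GTm.app f ts, fun c => c.elim⟩

end CLP

namespace CLP

section Aux

variable {F : Type} {arF : F → ℕ} {Pc : Type} {arP : Pc → ℕ}
  {Prd : Type} {arPrd : Prd → ℕ} {D : Type} {I : Interp F arF Pc arP D}

theorem Tm.eval_rename' (If : (f : F) → (Fin (arF f) → D) → D) (σ : ℕ → ℕ) (v : ℕ → D) :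
    ∀ t : Tm F arF, (t.rename σ).eval If v = t.eval If (fun x => v (σ x))
  | .var _ => rfl
  | .app f ts => congrArg (If f) (funext fun i => Tm.eval_rename' If σ v (ts i))

theorem Con.sat_rename' (σ : ℕ → ℕ) (v : ℕ → D) :
    ∀ c : Con F arF Pc arP, (c.rename σ).Sat I v ↔ c.Sat I (fun x => v (σ x))
  | .tru => Iff.rfl
  | .eq s t => by simp only [Con.rename, Con.Sat, Tm.eval_rename']
  | .prim c ts => by simp only [Con.rename, Con.Sat, Tm.eval_rename']
  | .and c d => by
      simp only [Con.rename, Con.Sat, Con.sat_rename' σ v c, Con.sat_rename' σ v d]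

theorem Tm.eval_congr' (If : (f : F) → (Fin (arF f) → D) → D) (v w : ℕ → D) :
    ∀ t : Tm F arF, (∀ x ∈ t.fv, v x = w x) → t.eval If v = t.eval If w
  | .var x, h => h x (by simp [Tm.fv])
  | .app f ts, h => congrArg (If f) (funext fun i => Tm.eval_congr' If v w (ts i)
      (fun x hx => h x (by
        simp only [Tm.fv, Finset.mem_biUnion, Finset.mem_univ, true_and]
        exact ⟨i, hx⟩)))

theorem Con.sat_congr' (v w : ℕ → D) :
    ∀ c : Con F arF Pc arP, (∀ x ∈ c.fv, v x = w x) → (c.Sat I v ↔ c.Sat I w)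
  | .tru, _ => Iff.rfl
  | .eq s t, h => by
      simp only [Con.Sat]
      rw [Tm.eval_congr' I.fn v w s (fun x hx => h x (by simp [Con.fv, hx])),
          Tm.eval_congr' I.fn v w t (fun x hx => h x (by simp [Con.fv, hx]))]
  | .prim c ts, h => by
      simp only [Con.Sat]
      have hts : ∀ i, (ts i).eval I.fn v = (ts i).eval I.fn w := fun i =>
        Tm.eval_congr' I.fn v w (ts i) (fun x hx => h x (by
          simp only [Con.fv, Finset.mem_biUnion, Finset.mem_univ, true_and]
          exact ⟨i, hx⟩))
      rw [show (fun i => (ts i).eval I.fn v) = (fun i => (ts i).eval I.fn w) from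
        funext hts]
  | .and c d, h => by
      simp only [Con.Sat]
      rw [Con.sat_congr' v w c (fun x hx => h x (by simp [Con.fv, hx])),
          Con.sat_congr' v w d (fun x hx => h x (by simp [Con.fv, hx]))]

theorem Tm.fv_rename' (σ : ℕ → ℕ) :
    ∀ t : Tm F arF, (t.rename σ).fv = t.fv.image σ
  | .var x => by simp [Tm.rename, Tm.fv]
  | .app f ts => by
      simp only [Tm.rename, Tm.fv, Finset.biUnion_image]
      exact Finset.biUnion_congr rfl (fun i _ => Tm.fv_rename' σ (ts i))

theorem Con.fv_rename' (σ : ℕ → ℕ) :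
    ∀ c : Con F arF Pc arP, (c.rename σ).fv = c.fv.image σ
  | .tru => by simp [Con.rename, Con.fv]
  | .eq s t => by simp [Con.rename, Con.fv, Tm.fv_rename', Finset.image_union]
  | .prim c ts => by
      simp only [Con.rename, Con.fv, Finset.biUnion_image]
      exact Finset.biUnion_congr rfl (fun i _ => Tm.fv_rename' σ (ts i))
  | .and c d => by
      simp [Con.rename, Con.fv, Con.fv_rename' σ c, Con.fv_rename' σ d, Finset.image_union]

theorem Tm.rename_comp' (f g : ℕ → ℕ) :
    ∀ t : Tm F arF, (t.rename f).rename g = t.rename (fun x => g (f x))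
  | .var _ => rfl
  | .app fn ts => congrArg (Tm.app fn) (funext fun i => Tm.rename_comp' f g (ts i))

theorem Con.rename_comp' (f g : ℕ → ℕ) :
    ∀ c : Con F arF Pc arP, (c.rename f).rename g = c.rename (fun x => g (f x))
  | .tru => rfl
  | .eq s t => by simp [Con.rename, Tm.rename_comp']
  | .prim c ts => by simp [Con.rename, Tm.rename_comp']
  | .and c d => by simp [Con.rename, Con.rename_comp' f g c, Con.rename_comp' f g d]

theorem Rule.rename_comp' (f g : ℕ → ℕ) (ru : Rule F arF Pc arP Prd arPrd) :
    (ru.rename f).rename g = ru.rename (fun x => g (f x)) := by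
  simp only [Rule.rename, Con.rename_comp', Tm.rename_comp']

theorem Rule.fv_rename' (σ : ℕ → ℕ) (ru : Rule F arF Pc arP Prd arPrd) :
    (ru.rename σ).fv = ru.fv.image σ := by
  simp only [Rule.rename, Rule.fv, Con.fv_rename', Tm.fv_rename', Finset.image_union,
    Finset.biUnion_image]
  rfl

theorem foldr_and_sat (v : ℕ → D) :
    ∀ l : List (Con F arF Pc arP),
      ((l.foldr Con.and Con.tru).Sat I v ↔ ∀ c ∈ l, c.Sat I v)
  | [] => by
      simp only [List.foldr_nil]
      constructor
      · intro _ c hc; exact absurd hc List.not_mem_nil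
      · intro _; trivial
  | c :: l => by
      simp only [List.foldr_cons, List.mem_cons]
      constructor
      · rintro ⟨h1, h2⟩ c' hc'
        rcases hc' with rfl | hc'
        · exact h1
        · exact (foldr_and_sat v l).1 h2 c' hc'
      · intro hall
        exact ⟨hall c (Or.inl rfl), (foldr_and_sat v l).2 fun c' hc' => hall c' (Or.inr hc')⟩

theorem argsEqCon_sat {n : ℕ} (u w : Fin n → Tm F arF) (v : ℕ → D) :
    (argsEqCon (Pc := Pc) (arP := arP) u w).Sat I v ↔
      ∀ i, (u i).eval I.fn v = (w i).eval I.fn v := by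
  rw [argsEqCon, foldr_and_sat]
  constructor
  · intro hall i
    exact hall (Con.eq (u i) (w i)) (by rw [List.mem_ofFn]; exact ⟨i, rfl⟩)
  · intro hi c hc
    rw [List.mem_ofFn] at hc
    obtain ⟨i, rfl⟩ := hc
    exact hi i

/-! ### A permutation pushing an initial segment up -/

def addSwapFun (N : ℕ) (x : ℕ) : ℕ :=
  if x < N then x + N else if x < 2 * N then x - N else x

theorem addSwapFun_involutive (N : ℕ) : Function.Involutive (addSwapFun N) := by
  intro x
  unfold addSwapFun
  split_ifs <;> omega

def addSwap (N : ℕ) : ℕ ≃ ℕ := (addSwapFun_involutive N).toPerm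

theorem addSwap_apply_lt (N : ℕ) {x : ℕ} (h : x < N) : addSwap N x = x + N := by
  show addSwapFun N x = x + N
  unfold addSwapFun
  simp [h]

/-! ### The inverse renaming -/

open Classical in
noncomputable def unr (N : ℕ → ℕ) (x : ℕ) : ℕ :=
  if h : ∃ m, N m ≤ x ∧ x < 2 * N m then x - N h.choose else x

theorem Nmono {N : ℕ → ℕ} (hN : ∀ m, 2 * N m ≤ N (m + 1)) {a b : ℕ} (hab : a ≤ b) :
    N a ≤ N b := by
  induction hab with
  | refl => exact le_rfl
  | step _ ih => exact le_trans ih (le_trans (by omega) (hN _))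

theorem Ncross {N : ℕ → ℕ} (hN : ∀ m, 2 * N m ≤ N (m + 1)) {a b : ℕ} (hab : a < b) :
    2 * N a ≤ N b :=
  le_trans (hN a) (Nmono hN hab)

theorem unr_small {N : ℕ → ℕ} (hN : ∀ m, 2 * N m ≤ N (m + 1)) {x : ℕ} (hx : x < N 0) :
    unr N x = x := by
  rw [unr, dif_neg]
  rintro ⟨m, hm1, _⟩
  have := Nmono hN (Nat.zero_le m)
  omega

theorem unr_spec {N : ℕ → ℕ} (hN : ∀ m, 2 * N m ≤ N (m + 1)) {m x : ℕ}
    (hx1 : N m ≤ x) (hx2 : x < 2 * N m) : unr N x = x - N m := by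
  have hex : ∃ m, N m ≤ x ∧ x < 2 * N m := ⟨m, hx1, hx2⟩
  rw [unr, dif_pos hex]
  obtain ⟨h1', h2'⟩ := hex.choose_spec
  rcases lt_trichotomy hex.choose m with h | h | h
  · have := Ncross hN h; omega
  · rw [h]
  · have := Ncross hN h; omega

/-! ### The shifted sequence of rules and the new derivation -/

variable (r : Rule F arF Pc arP Prd arPrd) (rv : ℕ → Rule F arF Pc arP Prd arPrd)

def ruleSeq : ℕ → Rule F arF Pc arP Prd arPrd
  | 0 => r
  | n + 1 => rv n

def Nseq : ℕ → ℕ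
  | 0 => r.fv.sup id + 1
  | n + 1 => max (2 * Nseq n) ((rv n).fv.sup id + 1)

def rvNew (n : ℕ) : Rule F arF Pc arP Prd arPrd :=
  (ruleSeq r rv n).rename (addSwap (Nseq r rv n))

def Bseq : ℕ → Prd
  | 0 => r.hp
  | n + 1 => (ruleSeq r rv n).bp

theorem Nseq_succ_ge (n : ℕ) : 2 * Nseq r rv n ≤ Nseq r rv (n + 1) := le_max_left _ _

theorem fv_lt_Nseq : ∀ n, ∀ x ∈ (ruleSeq r rv n).fv, x < Nseq r rv n
  | 0, x, hx => by
      have h1 : x ≤ r.fv.sup id := Finset.le_sup (f := id) hx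
      show x < r.fv.sup id + 1
      omega
  | n + 1, x, hx => by
      have h1 : x ≤ (rv n).fv.sup id := Finset.le_sup (f := id) hx
      exact lt_of_lt_of_le (by omega) (le_max_right _ _)

theorem rvNew_fv (n : ℕ) :
    ∀ x ∈ (rvNew r rv n).fv, Nseq r rv n ≤ x ∧ x < 2 * Nseq r rv n := by
  intro x hx
  rw [rvNew, Rule.fv_rename'] at hx
  obtain ⟨y, hy, rfl⟩ := Finset.mem_image.1 hx
  have hy' := fv_lt_Nseq r rv n y hy
  rw [addSwap_apply_lt _ hy']
  omega

theorem headQuery_fv_subset : r.headQuery.fv ⊆ r.fv := by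
  intro x hx
  rw [Rule.headQuery, Query.fv] at hx
  rw [Rule.fv]
  rcases Finset.mem_union.1 hx with h | h
  · exact Finset.mem_union_left _ (Finset.mem_union_left _ h)
  · exact Finset.mem_union_left _ (Finset.mem_union_right _ h)

theorem con_fv_subset' (ru : Rule F arF Pc arP Prd arPrd) : ru.con.fv ⊆ ru.fv := by
  intro x hx
  rw [Rule.fv]
  exact Finset.mem_union_left _ (Finset.mem_union_right _ hx)

theorem hargs_fv_subset' (ru : Rule F arF Pc arP Prd arPrd) (i : Fin (arPrd ru.hp)) :
    (ru.hargs i).fv ⊆ ru.fv := by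
  intro x hx
  rw [Rule.fv]
  refine Finset.mem_union_left _ (Finset.mem_union_left _ ?_)
  simp only [Finset.mem_biUnion, Finset.mem_univ, true_and]
  exact ⟨i, hx⟩

theorem bargs_fv_subset' (ru : Rule F arF Pc arP Prd arPrd) (i : Fin (arPrd ru.bp)) :
    (ru.bargs i).fv ⊆ ru.fv := by
  intro x hx
  rw [Rule.fv]
  refine Finset.mem_union_right _ ?_
  simp only [Finset.mem_biUnion, Finset.mem_univ, true_and]
  exact ⟨i, hx⟩

def newS (hpB : ∀ n, (ruleSeq r rv n).hp = Bseq r rv n) :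
    (n : ℕ) → {q : Query F arF Pc arP Prd arPrd // q.p = Bseq r rv n}
  | 0 => ⟨r.headQuery, rfl⟩
  | n + 1 =>
    ⟨⟨(rvNew r rv n).bp, (rvNew r rv n).bargs,
      stepCon (rvNew r rv n) (newS hpB n).1
        ((hpB n).trans (newS hpB n).2.symm)⟩, rfl⟩

theorem newS_sat (hpB : ∀ n, (ruleSeq r rv n).hp = Bseq r rv n)
    (n : ℕ) (v : ℕ → D)
    (Hcon : ∀ k ≤ n, ((ruleSeq r rv k).con).Sat I v)
    (Heq : ∀ m < n, ∀ j : Fin (arPrd (Bseq r rv (m + 1))),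
      ((ruleSeq r rv (m + 1)).hargs
          (Fin.cast (congrArg arPrd (hpB (m + 1))).symm j)).eval I.fn v =
        ((ruleSeq r rv m).bargs j).eval I.fn v) :
    ∀ k ≤ n + 1,
      ((newS r rv hpB k).1.con).Sat I (fun x => v (unr (Nseq r rv) x)) := by
  have hN2 : ∀ m, 2 * Nseq r rv m ≤ Nseq r rv (m + 1) := Nseq_succ_ge r rv
  set w : ℕ → D := fun x => v (unr (Nseq r rv) x) with hw
  have hw0 : ∀ x ∈ r.fv, w x = v x := by
    intro x hx
    have hlt : x < Nseq r rv 0 := fv_lt_Nseq r rv 0 x hx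
    show v (unr (Nseq r rv) x) = v x
    rw [unr_small hN2 hlt]
  have hwσ : ∀ k, ∀ x ∈ (ruleSeq r rv k).fv, w (addSwap (Nseq r rv k) x) = v x := by
    intro k x hx
    have hlt : x < Nseq r rv k := fv_lt_Nseq r rv k x hx
    show v (unr (Nseq r rv) (addSwap (Nseq r rv k) x)) = v x
    rw [addSwap_apply_lt _ hlt, unr_spec (m := k) hN2 (by omega) (by omega)]
    congr 1
    omega
  -- transported evaluation of head/body arguments
  have hH : ∀ k (j : Fin (arPrd (ruleSeq r rv k).hp)),
      (((ruleSeq r rv k).hargs j).rename (addSwap (Nseq r rv k))).eval I.fn w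
        = ((ruleSeq r rv k).hargs j).eval I.fn v := by
    intro k j
    rw [Tm.eval_rename']
    exact Tm.eval_congr' I.fn _ v _ (fun x hx => hwσ k x (hargs_fv_subset' _ j hx))
  have hB : ∀ k (j : Fin (arPrd (ruleSeq r rv k).bp)),
      (((ruleSeq r rv k).bargs j).rename (addSwap (Nseq r rv k))).eval I.fn w
        = ((ruleSeq r rv k).bargs j).eval I.fn v := by
    intro k j
    rw [Tm.eval_rename']
    exact Tm.eval_congr' I.fn _ v _ (fun x hx => hwσ k x (bargs_fv_subset' _ j hx))
  intro k
  induction k with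
  | zero =>
    intro _
    show (r.con.Sat I w)
    exact (Con.sat_congr' w v r.con
      (fun x hx => hw0 x (con_fv_subset' r hx))).2 (Hcon 0 (Nat.zero_le n))
  | succ k ih =>
    intro hk
    have hk' : k ≤ n := Nat.succ_le_succ_iff.1 hk
    refine ⟨?_, ?_, ?_⟩
    · -- equality part
      rw [argsEqCon_sat]
      intro i
      cases k with
      | zero =>
        refine (hH 0 _).trans ?_
        have hcast : ∀ e : arPrd (r.headQuery.p) = arPrd r.hp,
            (Fin.cast e i) = i := fun e => rfl
        refine Eq.trans ?_ ((Tm.eval_congr' I.fn w v (r.hargs i)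
          (fun x hx => hw0 x (hargs_fv_subset' r i hx))).symm)
        exact congrArg (fun j => ((r.hargs j).eval I.fn v)) (hcast _)
      | succ m =>
        refine (hH (m + 1) _).trans ?_
        refine (Heq m (by omega) i).trans ?_
        exact (hB m i).symm
    · -- constraint of the rule
      show (((ruleSeq r rv k).con).rename (addSwap (Nseq r rv k))).Sat I w
      rw [Con.sat_rename']
      exact (Con.sat_congr' _ v _
        (fun x hx => hwσ k x (con_fv_subset' _ hx))).2 (Hcon k hk')
    · -- previous constraint
      exact ih (Nat.le_of_succ_le hk)

end Aux

end CLP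


open CLP in
/-- for a rule `r = H ← c ◇ B` of program `P`, if `⟨B|c⟩` loops
w.r.t. `P` then `⟨H|c⟩` loops w.r.t. `P`. -/
theorem stmt6 {F : Type} {arF : F → ℕ} {Pc : Type} {arP : Pc → ℕ}
    {Prd : Type} {arPrd : Prd → ℕ} {D : Type} (I : Interp F arF Pc arP D)
    (P : Set (Rule F arF Pc arP Prd arPrd)) (r : Rule F arF Pc arP Prd arPrd)
    (hr : r ∈ P) (hc : ∃ v : ℕ → D, r.con.Sat I v)
    (h : Loops I P r.bodyQuery) :
    Loops I P r.headQuery := by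
  classical
  obtain ⟨S, rv, hS0, hstep⟩ := h
  have hPvar : ∀ n, ∃ r' ∈ P, r'.IsVariant (rv n) := fun n => (hstep n).1
  have hSW : ∀ n, StepWith I (rv n) (S n) (S (n + 1)) := fun n => (hstep n).2.2.2
  choose hp_eq hsat Teq using hSW
  have hSp : ∀ n, (S n).p = Bseq r rv (n + 1) := by
    intro n
    cases n with
    | zero => rw [hS0]; rfl
    | succ m => rw [Teq m]; rfl
  have hpB : ∀ n, (ruleSeq r rv n).hp = Bseq r rv n := by
    intro n
    cases n with
    | zero => rfl
    | succ m => exact (hp_eq m).trans (hSp m)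
  have chainDown : ∀ m (v : ℕ → D), ((S (m + 1)).con).Sat I v → ((S m).con).Sat I v := by
    intro m v hv
    rw [Teq m] at hv
    exact hv.2.2
  have chainSat : ∀ m (v : ℕ → D), ((S m).con).Sat I v → ∀ k ≤ m, ((S k).con).Sat I v := by
    intro m
    induction m with
    | zero =>
      intro v hv k hk
      have hk0 : k = 0 := Nat.le_zero.1 hk
      rw [hk0]; exact hv
    | succ m ih =>
      intro v hv k hk
      rcases eq_or_lt_of_le hk with rfl | hlt
      · exact hv
      · exact ih v (chainDown m v hv) k (Nat.lt_succ_iff.1 hlt)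
  have compCon : ∀ m (v : ℕ → D), ((S (m + 1)).con).Sat I v → ((rv m).con).Sat I v := by
    intro m v hv
    rw [Teq m] at hv
    exact hv.2.1
  have compEq : ∀ m (v : ℕ → D), ((S (m + 1)).con).Sat I v →
      ∀ (e : (rv m).hp = (S m).p) (i : Fin (arPrd (S m).p)),
        ((rv m).hargs (Fin.cast (congrArg arPrd e).symm i)).eval I.fn v
          = ((S m).args i).eval I.fn v := by
    intro m v hv e i
    rw [Teq m] at hv
    have h1 := hv.1
    rw [argsEqCon_sat] at h1
    exact h1 i
  refine ⟨fun n => (newS r rv hpB n).1, rvNew r rv, rfl, ?_⟩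
  intro n
  have hN2 : ∀ m, 2 * Nseq r rv m ≤ Nseq r rv (m + 1) := Nseq_succ_ge r rv
  refine ⟨?_, ?_, ?_, ?_⟩
  · cases n with
    | zero => exact ⟨r, hr, addSwap (Nseq r rv 0), rfl⟩
    | succ m =>
      obtain ⟨r'', hr'', ρ, hρ⟩ := hPvar m
      refine ⟨r'', hr'', ρ.trans (addSwap (Nseq r rv (m + 1))), ?_⟩
      show (rv m).rename (addSwap (Nseq r rv (m + 1))) = _
      rw [hρ, Rule.rename_comp']
      rfl
  · rw [Finset.disjoint_left]
    intro x hx hx'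
    have h1 := rvNew_fv r rv n x hx
    have h2 := fv_lt_Nseq r rv 0 x (headQuery_fv_subset r hx')
    have h3 := Nmono hN2 (Nat.zero_le n)
    omega
  · intro m hm
    rw [Finset.disjoint_left]
    intro x hx hx'
    have h1 := rvNew_fv r rv n x hx
    have h2 := rvNew_fv r rv m x hx'
    have h3 := Ncross hN2 hm
    omega
  · obtain ⟨v, hv⟩ := hsat n
    have hv' : ((S (n + 1)).con).Sat I v := by rw [Teq n]; exact hv
    have Hcon : ∀ k ≤ n, ((ruleSeq r rv k).con).Sat I v := by
      intro k hk
      cases k with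
      | zero =>
        have h0 := chainSat (n + 1) v hv' 0 (Nat.zero_le _)
        rw [hS0] at h0
        exact h0
      | succ m =>
        exact compCon m v (chainSat (n + 1) v hv' (m + 1) (by omega))
    have Heq : ∀ m < n, ∀ j : Fin (arPrd (Bseq r rv (m + 1))),
        ((ruleSeq r rv (m + 1)).hargs
            (Fin.cast (congrArg arPrd (hpB (m + 1))).symm j)).eval I.fn v =
          ((ruleSeq r rv m).bargs j).eval I.fn v := by
      intro m hm j
      have hEq := compEq m v (chainSat (n + 1) v hv' (m + 1) (by omega))
      cases m with
      | zero =>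
        rw [hS0] at hEq
        exact hEq (hpB 1) j
      | succ l =>
        rw [Teq l] at hEq
        exact hEq (hpB (l + 2)) j
    refine ⟨(hpB n).trans (newS r rv hpB n).2.symm,
      ⟨fun x => v (unr (Nseq r rv) x), ?_⟩, rfl⟩
    exact newS_sat r rv hpB n v Hcon Heq (n + 1) le_rfl
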